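/- Let P^{AE} be a normalized distribution on A × E with P^E(e) > 0 for all e, and B a finite set with |B| = M ≥ 2. Let (f_x : A → B)_{x∈X} be a universal₂ ensemble over a finite probability space (X,w), i.e. Pr_X[f_X(a₁)=f_X(a₂)] ≤ 1/M for all a₁ ≠ a₂. Then for every s ∈ (0,1], E_X [ I'(f_X(A)|E|P^{AE}) ] ≤ η( M^s · Σ_{a,e} P^{AE}(a,e)^{1+s}·P^E(e)^{-s} , 1 + log M ), where η(x,y) := x·y − x·log x. (Here Σ_{a,e} P^{AE}(a,e)^{1+s} P^E(e)^{-s} = e^{−s·H_{1+s}(A|E|P^{AE})}.) -/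

import Mathlib

open scoped BigOperators

open Classical in
/-- Probability of the event `p` with respect to the weight `w` on a finite index set. -/
noncomputable def prOf {X : Type*} [Fintype X] (w : X → ℝ) (p : X → Prop) : ℝ :=
  ∑ x, if p x then w x else 0

open Classical in
/-- Pushforward `P^{f(A),E}(b,e) = Σ_{a : f(a)=b} P^{AE}(a,e)`. -/
noncomputable def push {A B E : Type*} [Fintype A] (f : A → B) (P : A × E → ℝ)
    (b : B) (e : E) : ℝ :=
  ∑ a, if f a = b then P (a, e) else 0

/-- `η(x,y) = x·y − x·log x`. -/
noncomputable def eta (x y : ℝ) : ℝ := x * y - x * Real.log x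

lemma key_ineq {M s r : ℝ} (hM : 2 ≤ M) (hs0 : 0 < s) (hs1 : s ≤ 1)
    (hr : 0 < r) (hrM : r ≤ M) :
    Real.log (1 + r) ≤ eta (r ^ s) (1 + Real.log M) := by
  have hM0 : (0:ℝ) < M := by linarith
  have hlogM : 0 ≤ Real.log M := Real.log_nonneg (by linarith)
  rw [eta, Real.log_rpow hr]
  rcases le_total r 1 with h1 | h1
  · have h2 : Real.log (1 + r) ≤ r := by
      have := Real.log_le_sub_one_of_pos (show (0:ℝ) < 1 + r by linarith)
      linarith
    have h3 : r ≤ r ^ s := by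
      calc r = r ^ (1:ℝ) := (Real.rpow_one r).symm
        _ ≤ r ^ s := Real.rpow_le_rpow_of_exponent_ge hr h1 hs1
    have hrs : 0 < r ^ s := Real.rpow_pos_of_pos hr s
    have hlogr : Real.log r ≤ 0 := Real.log_nonpos hr.le h1
    nlinarith [mul_nonneg hrs.le (mul_nonneg hs0.le (neg_nonneg.2 hlogr)),
      mul_nonneg hrs.le hlogM]
  · have hu0 : 0 ≤ Real.log r := Real.log_nonneg h1
    set u := s * Real.log r with hu
    have huM : u ≤ Real.log M := by
      have h4 : Real.log r ≤ Real.log M := Real.log_le_log hr hrM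
      nlinarith
    have hu0' : 0 ≤ u := mul_nonneg hs0.le hu0
    have hrs : r ^ s = Real.exp u := by
      rw [Real.rpow_def_of_pos hr, hu, mul_comm]
    have h1r : Real.log (1 + r) ≤ 1 + Real.log M := by
      have he : (2:ℝ) ≤ Real.exp 1 := by
        have := Real.add_one_le_exp (1:ℝ); linarith
      have harg : (1:ℝ) + r ≤ Real.exp 1 * M := by nlinarith
      calc Real.log (1 + r) ≤ Real.log (Real.exp 1 * M) :=
            Real.log_le_log (by linarith) harg
        _ = 1 + Real.log M := by
            rw [Real.log_mul (by positivity) (by positivity), Real.log_exp]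
    have hexp : u + 1 ≤ Real.exp u := Real.add_one_le_exp u
    have hkey : 1 + Real.log M ≤ Real.exp u * ((1 + Real.log M) - u) := by
      nlinarith [mul_nonneg hu0' (sub_nonneg.2 huM)]
    calc Real.log (1 + r) ≤ 1 + Real.log M := h1r
      _ ≤ Real.exp u * ((1 + Real.log M) - u) := hkey
      _ = r ^ s * (1 + Real.log M) - r ^ s * u := by rw [hrs]; ring

theorem stmt_15 {A B E : Type*} [Fintype A] [Nonempty A] [Fintype B]
    [Fintype E] [Nonempty E] (hB : 2 ≤ Fintype.card B)
    (P : A × E → ℝ) (hP0 : ∀ x, 0 ≤ P x) (hP1 : ∑ x, P x = 1)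
    (hPE : ∀ e : E, 0 < ∑ a, P (a, e))
    {X : Type*} [Fintype X] [Nonempty X] (w : X → ℝ)
    (hw0 : ∀ x, 0 ≤ w x) (hw1 : ∑ x, w x = 1)
    (f : X → A → B)
    (huniv : ∀ a₁ a₂ : A, a₁ ≠ a₂ →
      prOf w (fun x => f x a₁ = f x a₂) ≤ (Fintype.card B : ℝ)⁻¹)
    (s : ℝ) (hs0 : 0 < s) (hs1 : s ≤ 1) :
    ∑ x, w x *
        ∑ b : B, ∑ e : E, push (f x) P b e *
          Real.log ((Fintype.card B : ℝ) * push (f x) P b e / (∑ a, P (a, e))) ≤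
      eta ((Fintype.card B : ℝ) ^ s *
          ∑ a : A, ∑ e : E, P (a, e) ^ (1 + s) * (∑ a', P (a', e)) ^ (-s))
        (1 + Real.log (Fintype.card B : ℝ)) := by
  classical
  set M : ℝ := (Fintype.card B : ℝ) with hMdef
  have hM : (2:ℝ) ≤ M := by rw [hMdef]; exact_mod_cast hB
  have hM0 : (0:ℝ) < M := by linarith
  set c : ℝ := 1 + Real.log M with hc
  set PE : E → ℝ := fun e => ∑ a, P (a, e) with hPEdef
  have hPEpos : ∀ e, 0 < PE e := hPE
  have hPle : ∀ (a : A) (e : E), P (a, e) ≤ PE e := by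
    intro a e
    exact Finset.single_le_sum (f := fun a' => P (a', e))
      (fun a' _ => hP0 (a', e)) (Finset.mem_univ a)
  set t : A × E → ℝ := fun p => (M * P p / PE p.2) ^ s with ht
  have ht0 : ∀ p, 0 ≤ t p := fun p =>
    Real.rpow_nonneg (div_nonneg (mul_nonneg hM0.le (hP0 p)) (hPEpos p.2).le) s
  show (∑ x, w x * ∑ b : B, ∑ e : E, push (f x) P b e *
        Real.log (M * push (f x) P b e / PE e)) ≤
      eta (M ^ s * ∑ a : A, ∑ e : E, P (a, e) ^ (1 + s) * PE e ^ (-s)) c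
  -- Step 1: rewrite the inner sum of the LHS per x
  have eq1 : ∀ x, (∑ b : B, ∑ e : E, push (f x) P b e *
        Real.log (M * push (f x) P b e / PE e))
      = ∑ e : E, ∑ a : A, P (a, e) *
          Real.log (M * push (f x) P (f x a) e / PE e) := by
    intro x
    rw [Finset.sum_comm]
    refine Finset.sum_congr rfl (fun e _ => ?_)
    have hterm : ∀ b : B, push (f x) P b e *
          Real.log (M * push (f x) P b e / PE e)
        = ∑ a : A, if f x a = b then
            P (a, e) * Real.log (M * push (f x) P b e / PE e) else 0 := by
      intro b
      rw [push, Finset.sum_mul]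
      refine Finset.sum_congr rfl (fun a _ => ?_)
      split <;> simp
    simp_rw [hterm]
    rw [Finset.sum_comm]
    refine Finset.sum_congr rfl (fun a _ => ?_)
    simp [Finset.sum_ite_eq]
  -- Step 2: swap sums in the LHS
  have eq2 : (∑ x, w x * ∑ b : B, ∑ e : E, push (f x) P b e *
        Real.log (M * push (f x) P b e / PE e))
      = ∑ e : E, ∑ a : A, P (a, e) *
          (∑ x, w x * Real.log (M * push (f x) P (f x a) e / PE e)) := by
    simp_rw [eq1, Finset.mul_sum]
    rw [Finset.sum_comm]
    refine Finset.sum_congr rfl (fun e _ => ?_)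
    rw [Finset.sum_comm]
    refine Finset.sum_congr rfl (fun a _ => ?_)
    refine Finset.sum_congr rfl (fun x _ => ?_)
    ring
  -- Step 3: per (a,e) bound
  have claim1 : ∀ (a : A) (e : E),
      P (a, e) * (∑ x, w x * Real.log (M * push (f x) P (f x a) e / PE e))
        ≤ P (a, e) * eta (t (a, e)) c := by
    intro a e
    rcases eq_or_lt_of_le (hP0 (a, e)) with h0 | h0
    · rw [← h0]; simp
    · refine mul_le_mul_of_nonneg_left ?_ h0.le
      have hPEe := hPEpos e
      have hpush_ge : ∀ x, P (a, e) ≤ push (f x) P (f x a) e := by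
        intro x
        rw [push]
        have h := Finset.single_le_sum
          (f := fun a' => if f x a' = f x a then P (a', e) else 0)
          (fun a' _ => by by_cases h : f x a' = f x a <;> simp [h, hP0 (a', e)])
          (Finset.mem_univ a)
        simpa using h
      have hTpos : ∀ x, 0 < M * push (f x) P (f x a) e / PE e := by
        intro x
        have := lt_of_lt_of_le h0 (hpush_ge x)
        positivity
      set r : ℝ := M * P (a, e) / PE e with hr
      have hr0 : 0 < r := by positivity
      have hrM : r ≤ M := by
        rw [hr, div_le_iff₀ hPEe]
        nlinarith [hPle a e]
      -- Jensen for log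
      have j1 := (strictConcaveOn_log_Ioi.concaveOn).le_map_sum
        (w := w) (p := fun x => M * push (f x) P (f x a) e / PE e)
        (fun x _ => hw0 x) hw1 (fun x _ => Set.mem_Ioi.2 (hTpos x))
      simp only [smul_eq_mul] at j1
      -- bound the average
      have hS : (∑ x, w x * push (f x) P (f x a) e) ≤ P (a, e) + PE e / M := by
        have expand : (∑ x, w x * push (f x) P (f x a) e)
            = ∑ a' : A, P (a', e) * prOf w (fun x => f x a' = f x a) := by
          simp only [push, Finset.mul_sum, prOf]
          rw [Finset.sum_comm]
          refine Finset.sum_congr rfl (fun a' _ => ?_)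
          refine Finset.sum_congr rfl (fun x _ => ?_)
          by_cases h : f x a' = f x a <;> simp [h, mul_comm]
        rw [expand, ← Finset.add_sum_erase _ _ (Finset.mem_univ a)]
        have h_a : P (a, e) * prOf w (fun x => f x a = f x a) = P (a, e) := by
          simp [prOf, hw1]
        rw [h_a]
        have h_rest : (∑ a' ∈ Finset.univ.erase a,
            P (a', e) * prOf w (fun x => f x a' = f x a)) ≤ PE e / M := by
          calc (∑ a' ∈ Finset.univ.erase a,
                P (a', e) * prOf w (fun x => f x a' = f x a))
              ≤ ∑ a' ∈ Finset.univ.erase a, P (a', e) * M⁻¹ := by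
                refine Finset.sum_le_sum (fun a' ha' => ?_)
                exact mul_le_mul_of_nonneg_left
                  (huniv a' a (Finset.ne_of_mem_erase ha')) (hP0 (a', e))
            _ ≤ ∑ a' : A, P (a', e) * M⁻¹ := by
                refine Finset.sum_le_sum_of_subset_of_nonneg
                  (Finset.subset_univ _) (fun i _ _ => ?_)
                exact mul_nonneg (hP0 (i, e)) (by positivity)
            _ = PE e / M := by
                rw [← Finset.sum_mul, div_eq_mul_inv]
        linarith
      have havg_eq : (∑ x, w x * (M * push (f x) P (f x a) e / PE e))
          = (∑ x, w x * push (f x) P (f x a) e) * (M / PE e) := by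
        rw [Finset.sum_mul]
        refine Finset.sum_congr rfl (fun x _ => ?_)
        field_simp
        try ring
      have havg_le : (∑ x, w x * (M * push (f x) P (f x a) e / PE e)) ≤ 1 + r := by
        rw [havg_eq]
        have h1 : (∑ x, w x * push (f x) P (f x a) e) * (M / PE e)
            ≤ (P (a, e) + PE e / M) * (M / PE e) :=
          mul_le_mul_of_nonneg_right hS (by positivity)
        have h2 : (P (a, e) + PE e / M) * (M / PE e) = 1 + r := by
          rw [hr]; field_simp; ring
        linarith
      have havg_pos : 0 < ∑ x, w x * (M * push (f x) P (f x a) e / PE e) := by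
        have hlow : ∀ x : X, w x * r ≤ w x * (M * push (f x) P (f x a) e / PE e) := by
          intro x
          refine mul_le_mul_of_nonneg_left ?_ (hw0 x)
          rw [hr]
          exact div_le_div_of_nonneg_right
            (mul_le_mul_of_nonneg_left (hpush_ge x) hM0.le) hPEe.le
        have hsum : r ≤ ∑ x, w x * (M * push (f x) P (f x a) e / PE e) := by
          calc r = ∑ x, w x * r := by rw [← Finset.sum_mul, hw1, one_mul]
            _ ≤ _ := Finset.sum_le_sum (fun x _ => hlow x)
        linarith
      calc (∑ x, w x * Real.log (M * push (f x) P (f x a) e / PE e))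
          ≤ Real.log (∑ x, w x * (M * push (f x) P (f x a) e / PE e)) := j1
        _ ≤ Real.log (1 + r) := Real.log_le_log havg_pos havg_le
        _ ≤ eta (r ^ s) c := key_ineq hM hs0 hs1 hr0 hrM
        _ = eta (t (a, e)) c := rfl
  -- Step 4: Jensen for eta
  have hconc : ConcaveOn ℝ (Set.Ici (0:ℝ)) (fun z : ℝ => z * c - z * Real.log z) := by
    have hlin : ConcaveOn ℝ (Set.Ici (0:ℝ)) (fun z : ℝ => z * c) :=
      ⟨convex_Ici 0, fun x _ y _ p q _ _ _ => le_of_eq (by simp only [smul_eq_mul]; ring)⟩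
    exact hlin.sub Real.convexOn_mul_log
  have j2 := hconc.le_map_sum (t := Finset.univ) (w := P) (p := t)
    (fun p _ => hP0 p) hP1 (fun p _ => Set.mem_Ici.2 (ht0 p))
  simp only [smul_eq_mul] at j2
  -- Step 5: identify the sum ∑ p, P p * t p with the argument of eta
  have sumV : (∑ p : A × E, P p * t p)
      = M ^ s * ∑ a : A, ∑ e : E, P (a, e) ^ (1 + s) * PE e ^ (-s) := by
    have hterm : ∀ p : A × E, P p * t p
        = M ^ s * (P p ^ (1 + s) * PE p.2 ^ (-s)) := by
      intro p
      rcases eq_or_lt_of_le (hP0 p) with h0 | h0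
      · rw [← h0, Real.zero_rpow (by linarith : (1:ℝ) + s ≠ 0)]
        simp
      · have hPE2 := hPEpos p.2
        simp only [ht]
        rw [mul_div_assoc, Real.mul_rpow hM0.le (div_nonneg h0.le hPE2.le),
          Real.div_rpow h0.le hPE2.le, div_eq_mul_inv, ← Real.rpow_neg hPE2.le,
          Real.rpow_add h0 1 s, Real.rpow_one]
        ring
    simp_rw [hterm]
    rw [← Finset.mul_sum, Fintype.sum_prod_type]
  -- put everything together
  rw [eq2]
  calc (∑ e : E, ∑ a : A, P (a, e) *
        (∑ x, w x * Real.log (M * push (f x) P (f x a) e / PE e)))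
      ≤ ∑ e : E, ∑ a : A, P (a, e) * eta (t (a, e)) c := by
        refine Finset.sum_le_sum (fun e _ => Finset.sum_le_sum (fun a _ => ?_))
        exact claim1 a e
    _ = ∑ p : A × E, P p * eta (t p) c := by
        rw [Fintype.sum_prod_type, Finset.sum_comm]
    _ = ∑ p : A × E, P p * (t p * c - t p * Real.log (t p)) := rfl
    _ ≤ (∑ p : A × E, P p * t p) * c
          - (∑ p : A × E, P p * t p) * Real.log (∑ p : A × E, P p * t p) := j2
    _ = eta (∑ p : A × E, P p * t p) c := rfl
    _ = eta (M ^ s * ∑ a : A, ∑ e : E, P (a, e) ^ (1 + s) * PE e ^ (-s)) c := by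
        rw [sumV]
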